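/- If from every joint strategy of a finite game there is a finite improvement path ending in a Nash equilibrium, and every Nash equilibrium of the game is an (n−1)-equilibrium (where n is the number of players), and the social welfare weakly increases along every coalitional improvement step and strictly increases along profitable deviations of the grand coalition, then the game is coalitionally weakly acyclic and has a strong equilibrium. -/

import Mathlib

open Finset

/-- `s'` is a profitable deviation (of the non-empty coalition on which `s`
and `s'` differ) from `s`: every deviating player strictly improves. -/
def ProfDev {n : ℕ} {S : Fin n → Type} (p : (∀ i, S i) → Fin n → ℝ)
    (s s' : ∀ i, S i) : Prop :=
  s ≠ s' ∧ ∀ i, s i ≠ s' i → p s i < p s' i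

/-- A single-player profitable deviation. -/
def SingleStep {n : ℕ} {S : Fin n → Type} (p : (∀ i, S i) → Fin n → ℝ)
    (s s' : ∀ i, S i) : Prop :=
  ∃ i, (∀ j, j ≠ i → s j = s' j) ∧ s i ≠ s' i ∧ p s i < p s' i

/-- A Nash equilibrium: no single player can profitably deviate. -/
def NashEq {n : ℕ} {S : Fin n → Type} (p : (∀ i, S i) → Fin n → ℝ)
    (s : ∀ i, S i) : Prop :=
  ∀ s', ¬ SingleStep p s s'

/-- A strong equilibrium: no coalition has a profitable deviation. -/
def StrongEq {n : ℕ} {S : Fin n → Type} (p : (∀ i, S i) → Fin n → ℝ)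
    (s : ∀ i, S i) : Prop :=
  ∀ s', ¬ ProfDev p s s'

/-- The social welfare: the sum of all players' payoffs. -/
def SW {n : ℕ} {S : Fin n → Type} (p : (∀ i, S i) → Fin n → ℝ)
    (s : ∀ i, S i) : ℝ :=
  ∑ i, p s i

lemma single_to_prof {n : ℕ} {S : Fin n → Type} (p : (∀ i, S i) → Fin n → ℝ)
    {s s' : ∀ i, S i} (h : SingleStep p s s') : ProfDev p s s' := by
  obtain ⟨i, hoth, hne, hlt⟩ := h
  refine ⟨fun h => hne (congrFun h i), fun j hj => ?_⟩
  rcases eq_or_ne j i with rfl | hji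
  · exact hlt
  · exact absurd (hoth j hji) hj

lemma sw_mono {n : ℕ} {S : Fin n → Type} (p : (∀ i, S i) → Fin n → ℝ)
    (h3 : ∀ s s', ProfDev p s s' → SW p s ≤ SW p s')
    {s t : ∀ i, S i} (h : Relation.ReflTransGen (ProfDev p) s t) :
    SW p s ≤ SW p t := by
  induction h with
  | refl => exact le_rfl
  | tail _ hstep ih => exact le_trans ih (h3 _ _ hstep)

/-- If, in a finite game with `n` players: (1) from every joint strategy there
is a finite improvement path (single-player profitable deviations) ending in a
Nash equilibrium, (2) every Nash equilibrium is an `(n-1)`-equilibrium (no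
coalition of at most `n - 1` players can profitably deviate), and (3) the
social welfare weakly increases along every coalitional improvement step and
strictly increases under profitable deviations of the grand coalition, then
the game is coalitionally weakly acyclic: from every joint strategy there is a
finite coalitional improvement path ending in a strong equilibrium; in
particular the game has a strong equilibrium. -/
theorem c_weakly_acyclic_of_nash_reachable {n : ℕ}
    (S : Fin n → Type) [∀ i, Fintype (S i)] [∀ i, Nonempty (S i)]
    [∀ i, DecidableEq (S i)]
    (p : (∀ i, S i) → Fin n → ℝ)
    (h1 : ∀ s, ∃ t, Relation.ReflTransGen (SingleStep p) s t ∧ NashEq p t)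
    (h2 : ∀ s, NashEq p s → ∀ s', ProfDev p s s' →
      (univ.filter (fun i => s i ≠ s' i)).card ≤ n - 1 → False)
    (h3 : ∀ s s', ProfDev p s s' → SW p s ≤ SW p s')
    (h4 : ∀ s s', ProfDev p s s' → (∀ i, s i ≠ s' i) → SW p s < SW p s') :
    (∀ s, ∃ t, Relation.ReflTransGen (ProfDev p) s t ∧ StrongEq p t) ∧
    ∃ s, StrongEq p s := by
  classical
  have main : ∀ s, ∃ t, Relation.ReflTransGen (ProfDev p) s t ∧ StrongEq p t := by
    set F : (∀ i, S i) → ℕ := fun u => (univ.filter (fun v => SW p u < SW p v)).card with hF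
    suffices key : ∀ m s, F s < m → ∃ t, Relation.ReflTransGen (ProfDev p) s t ∧ StrongEq p t by
      intro s; exact key (F s + 1) s (Nat.lt_succ_self _)
    intro m
    induction m with
    | zero => intro s hs; exact absurd hs (Nat.not_lt_zero _)
    | succ m ih =>
      intro s hfs
      obtain ⟨t, hpath, hnash⟩ := h1 s
      have hpath' : Relation.ReflTransGen (ProfDev p) s t :=
        Relation.ReflTransGen.mono (r := SingleStep p) (fun a b h => single_to_prof p h) s t hpath
      by_cases hstr : StrongEq p t
      · exact ⟨t, hpath', hstr⟩
      · simp only [StrongEq, not_forall, not_not] at hstr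
        obtain ⟨t', hdev⟩ := hstr
        have hall : ∀ i, t i ≠ t' i := by
          by_contra h
          push_neg at h
          obtain ⟨i, hi⟩ := h
          refine h2 t hnash t' hdev ?_
          have hsub : (univ.filter (fun j => t j ≠ t' j)) ⊆ univ.erase i := by
            intro j hj
            simp only [mem_filter, mem_univ, true_and] at hj
            refine mem_erase.2 ⟨?_, mem_univ j⟩
            rintro rfl; exact hj hi
          calc (univ.filter (fun j => t j ≠ t' j)).card ≤ (univ.erase i).card :=
                card_le_card hsub
            _ = n - 1 := by
                rw [card_erase_of_mem (mem_univ i), card_univ, Fintype.card_fin]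
        have hlt : SW p t < SW p t' := h4 t t' hdev hall
        have hst : SW p s ≤ SW p t := sw_mono p h3 hpath'
        have hFt : F t' < F s := by
          apply card_lt_card
          constructor
          · intro v hv
            simp only [hF, mem_filter, mem_univ, true_and] at hv ⊢
            exact lt_of_le_of_lt (le_of_lt (lt_of_le_of_lt hst hlt)) hv
          · intro hsub
            have ht'mem : t' ∈ univ.filter (fun v => SW p s < SW p v) := by
              simp only [mem_filter, mem_univ, true_and]
              exact lt_of_le_of_lt hst hlt
            have := hsub ht'mem
            simp only [mem_filter, mem_univ, true_and] at this
            exact lt_irrefl _ this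
        obtain ⟨u, hu, hsu⟩ := ih t' (lt_of_lt_of_le hFt (Nat.lt_succ_iff.1 hfs))
        exact ⟨u, (hpath'.tail hdev).trans hu, hsu⟩
  refine ⟨main, ?_⟩
  have : Nonempty (∀ i, S i) := ⟨fun i => Classical.arbitrary _⟩
  obtain ⟨t, _, ht⟩ := main this.some
  exact ⟨t, ht⟩
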